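/- arXiv:1002.4332 — 2 statements merged into one kernel-verified Lean document; each statement's English description precedes it below -/
import Mathlib

section
/- Let G be a finite simple graph with f(G) ≥ 3. Then |V(G)| ≥ χ(G) + 6. -/
open SimpleGraph

/-- The chromatic number of `G` as a natural number. -/
noncomputable def chi {V : Type*} (G : SimpleGraph V) : ℕ := G.chromaticNumber.toNat

/-- The independence number of `G`: the largest size of a set of pairwise
non-adjacent vertices. -/
noncomputable def indepNum {V : Type*} (G : SimpleGraph V) : ℕ :=
  sSup {n | ∃ s : Finset V, s.card = n ∧ ∀ u ∈ s, ∀ v ∈ s, u ≠ v → ¬ G.Adj u v}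

/-- The join `G + H` of two graphs: all edges of `G` and `H` together with all
edges between the two vertex sets. -/
def SimpleGraph.join {α β : Type*} (G : SimpleGraph α) (H : SimpleGraph β) :
    SimpleGraph (α ⊕ β) where
  Adj x y := match x, y with
    | Sum.inl a, Sum.inl b => G.Adj a b
    | Sum.inr a, Sum.inr b => H.Adj a b
    | Sum.inl _, Sum.inr _ => True
    | Sum.inr _, Sum.inl _ => True
  symm := ⟨by rintro (a | a) (b | b) h <;> first | trivial | exact G.symm.symm _ _ h | exact H.symm.symm _ _ h⟩
  loopless := ⟨by rintro (a | a) h <;> first | exact G.loopless.irrefl a h | exact H.loopless.irrefl a h⟩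

namespace ProofAux
set_option linter.unusedSectionVars false

variable {V : Type} [Fintype V]

lemma chi_colorable (G : SimpleGraph V) : G.Colorable (chi G) :=
  G.colorable_chromaticNumber_of_fintype

lemma chi_le_of_colorable {G : SimpleGraph V} {n : ℕ} (h : G.Colorable n) : chi G ≤ n := by
  have := h.chromaticNumber_le
  simpa [chi] using ENat.toNat_le_of_le_coe this

lemma chi_le_card (G : SimpleGraph V) : chi G ≤ Fintype.card V :=
  chi_le_of_colorable G.colorable_of_fintype

lemma colorable_of_induce_compl (G : SimpleGraph V) (S : Set V)
    (hS : ∀ a ∈ S, ∀ b ∈ S, a ≠ b → ¬ G.Adj a b) {n : ℕ}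
    (h : (G.induce Sᶜ).Colorable n) : G.Colorable (n + 1) := by
  classical
  obtain ⟨c⟩ := h
  refine ⟨SimpleGraph.Coloring.mk
    (fun v => if hv : v ∈ S then Fin.last n else (c ⟨v, hv⟩).castSucc) ?_⟩
  intro v w hadj
  by_cases hv : v ∈ S
  · by_cases hw : w ∈ S
    · exact absurd hadj (hS v hv w hw (G.ne_of_adj hadj))
    · simp only [dif_pos hv, dif_neg hw]
      exact fun hEq => absurd hEq.symm (Fin.castSucc_lt_last _).ne
  · by_cases hw : w ∈ S
    · simp only [dif_neg hv, dif_pos hw]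
      exact (Fin.castSucc_lt_last _).ne
    · simp only [dif_neg hv, dif_neg hw]
      intro hEq
      have hadj' : (G.induce Sᶜ).Adj ⟨v, hv⟩ ⟨w, hw⟩ := hadj
      exact c.valid hadj' (Fin.castSucc_injective _ hEq)

lemma chi_induce_compl (G : SimpleGraph V) (S : Set V) [Fintype ↥(Sᶜ)]
    (hS : ∀ a ∈ S, ∀ b ∈ S, a ≠ b → ¬ G.Adj a b) :
    chi G ≤ chi (G.induce Sᶜ) + 1 :=
  chi_le_of_colorable (colorable_of_induce_compl G S hS (chi_colorable _))

lemma cliqueNum_induce_le (G : SimpleGraph V) (S : Set V) [Fintype ↥S] :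
    (G.induce S).cliqueNum ≤ G.cliqueNum := by
  classical
  obtain ⟨s, hs⟩ := (G.induce S).exists_isNClique_cliqueNum
  have hinj : Set.InjOn Subtype.val (↑s : Set ↥S) := Set.injOn_of_injective Subtype.val_injective
  have hc : G.IsClique ↑(s.image Subtype.val) := by
    intro a ha b hb hab
    simp only [Finset.coe_image, Set.mem_image, Finset.mem_coe] at ha hb
    obtain ⟨x, hx, rfl⟩ := ha
    obtain ⟨y, hy, rfl⟩ := hb
    have hxy : x ≠ y := fun h => hab (by rw [h])
    exact hs.isClique (Finset.mem_coe.2 hx) (Finset.mem_coe.2 hy) hxy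
  have hcard : (s.image Subtype.val).card = s.card :=
    Finset.card_image_of_injective _ Subtype.val_injective
  calc (G.induce S).cliqueNum = s.card := hs.card_eq.symm
    _ = (s.image Subtype.val).card := hcard.symm
    _ ≤ G.cliqueNum := SimpleGraph.IsClique.card_le_cliqueNum (tc := hc)

lemma cliqueNum_lower (G : SimpleGraph V) (K : Finset V) (hK : G.IsClique ↑K) :
    K.card ≤ G.cliqueNum :=
  SimpleGraph.IsClique.card_le_cliqueNum (tc := hK)




variable {V : Type} [Fintype V] [DecidableEq V]

/-- A pairing: a finite set of disjoint non-adjacent (distinct) pairs. -/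
def IsPairing (G : SimpleGraph V) (P : Finset (V × V)) : Prop :=
  (∀ p ∈ P, p.1 ≠ p.2 ∧ ¬ G.Adj p.1 p.2) ∧
  (∀ p ∈ P, ∀ q ∈ P, p ≠ q → p.1 ≠ q.1 ∧ p.1 ≠ q.2 ∧ p.2 ≠ q.1 ∧ p.2 ≠ q.2)

def spt (P : Finset (V × V)) : Finset V := P.image Prod.fst ∪ P.image Prod.snd

lemma mem_spt {P : Finset (V × V)} {x : V} :
    x ∈ spt P ↔ ∃ p ∈ P, p.1 = x ∨ p.2 = x := by
  simp only [spt, Finset.mem_union, Finset.mem_image]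
  constructor
  · rintro (⟨p, hp, rfl⟩ | ⟨p, hp, rfl⟩)
    · exact ⟨p, hp, Or.inl rfl⟩
    · exact ⟨p, hp, Or.inr rfl⟩
  · rintro ⟨p, hp, (rfl | rfl)⟩
    · exact Or.inl ⟨p, hp, rfl⟩
    · exact Or.inr ⟨p, hp, rfl⟩

lemma card_spt {G : SimpleGraph V} {P : Finset (V × V)} (hP : IsPairing G P) :
    (spt P).card = 2 * P.card := by
  have hd : Disjoint (P.image Prod.fst) (P.image Prod.snd) := by
    rw [Finset.disjoint_left]
    rintro x hx hy
    simp only [Finset.mem_image] at hx hy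
    obtain ⟨p, hp, rfl⟩ := hx
    obtain ⟨q, hq, hq2⟩ := hy
    by_cases hpq : p = q
    · subst hpq
      exact (hP.1 p hp).1 hq2.symm
    · exact (hP.2 p hp q hq hpq).2.1 hq2.symm
  have h1 : (P.image Prod.fst).card = P.card := by
    apply Finset.card_image_of_injOn
    intro p hp q hq h
    by_contra hne
    exact (hP.2 p hp q hq hne).1 h
  have h2 : (P.image Prod.snd).card = P.card := by
    apply Finset.card_image_of_injOn
    intro p hp q hq h
    by_contra hne
    exact (hP.2 p hp q hq hne).2.2.2 h
  rw [spt, Finset.card_union_of_disjoint hd, h1, h2]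
  omega

lemma exists_max_pairing (G : SimpleGraph V) :
    ∃ P, IsPairing G P ∧ ∀ Q, IsPairing G Q → Q.card ≤ P.card := by
  classical
  have hne : (Finset.univ.filter (fun P : Finset (V × V) => IsPairing G P)).Nonempty := by
    refine ⟨∅, ?_⟩
    simp only [Finset.mem_filter, Finset.mem_univ, true_and]
    exact ⟨fun p hp => absurd hp (Finset.notMem_empty p),
           fun p hp => absurd hp (Finset.notMem_empty p)⟩
  obtain ⟨P, hP, hmax⟩ := Finset.exists_max_image _ Finset.card hne
  simp only [Finset.mem_filter, Finset.mem_univ, true_and] at hP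
  refine ⟨P, hP, fun Q hQ => ?_⟩
  exact hmax Q (by simp only [Finset.mem_filter, Finset.mem_univ, true_and]; exact hQ)

/-- The pairing gives a coloring: `χ(G) + |P| ≤ n`. -/
lemma chi_add_pairing_le (G : SimpleGraph V) (P : Finset (V × V)) (hP : IsPairing G P) :
    chi G + P.card ≤ Fintype.card V := by
  classical
  set T : Finset V := P.image Prod.snd with hT
  have hTcard : T.card = P.card := by
    apply Finset.card_image_of_injOn
    intro p hp q hq h
    by_contra hne
    exact (hP.2 p hp q hq hne).2.2.2 h
  let f : V → V := fun v => if h : ∃ p, p ∈ P ∧ p.2 = v then (Classical.choose h).1 else v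
  have hf_spec : ∀ v, (∃ p, p ∈ P ∧ p.2 = v) → ∃ p, p ∈ P ∧ p.2 = v ∧ f v = p.1 := by
    intro v h
    refine ⟨Classical.choose h, (Classical.choose_spec h).1, (Classical.choose_spec h).2, ?_⟩
    simp only [f, dif_pos h]
  have hf_no : ∀ v, ¬(∃ p, p ∈ P ∧ p.2 = v) → f v = v := by
    intro v h; simp only [f, dif_neg h]
  have hf_mem : ∀ v, f v ∈ Finset.univ \ T := by
    intro v
    rw [Finset.mem_sdiff]
    refine ⟨Finset.mem_univ _, ?_⟩
    by_cases h : ∃ p, p ∈ P ∧ p.2 = v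
    · obtain ⟨p, hp, hp2, hfv⟩ := hf_spec v h
      rw [hfv, hT]
      simp only [Finset.mem_image]
      rintro ⟨q, hq, hq2⟩
      by_cases hpq : p = q
      · subst hpq; exact (hP.1 p hq).1 hq2.symm
      · exact (hP.2 q hq p hp (Ne.symm hpq)).2.2.1 hq2
    · rw [hf_no v h, hT]
      simp only [Finset.mem_image]
      rintro ⟨q, hq, hq2⟩
      exact h ⟨q, hq, hq2⟩
  have hproper : ∀ {v w : V}, G.Adj v w → f v ≠ f w := by
    intro v w hadj hEq
    have hvw : v ≠ w := G.ne_of_adj hadj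
    by_cases h1 : ∃ p, p ∈ P ∧ p.2 = v
    · obtain ⟨p, hp, hp2, hfv⟩ := hf_spec v h1
      by_cases h2 : ∃ q, q ∈ P ∧ q.2 = w
      · obtain ⟨q, hq, hq2, hfw⟩ := hf_spec w h2
        rw [hfv, hfw] at hEq
        by_cases hpq : p = q
        · subst hpq; rw [hp2] at hq2; exact hvw (hq2 ▸ rfl)
        · exact (hP.2 p hp q hq hpq).1 hEq
      · rw [hfv, hf_no w h2] at hEq
        subst hEq
        exact (hP.1 p hp).2 (hp2 ▸ hadj.symm)
    · rw [hf_no v h1] at hEq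
      by_cases h2 : ∃ q, q ∈ P ∧ q.2 = w
      · obtain ⟨q, hq, hq2, hfw⟩ := hf_spec w h2
        rw [hfw] at hEq
        subst hEq
        exact (hP.1 q hq).2 (hq2 ▸ hadj)
      · rw [hf_no w h2] at hEq; exact hvw hEq
  have hcol : G.Colorable (Fintype.card ↥(Finset.univ \ T : Finset V)) := by
    refine SimpleGraph.Coloring.colorable (SimpleGraph.Coloring.mk
      (fun v => (⟨f v, hf_mem v⟩ : ↥(Finset.univ \ T : Finset V))) ?_)
    intro v w hadj hEq
    exact hproper hadj (congrArg Subtype.val hEq)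
  have hchi := chi_le_of_colorable hcol
  rw [Fintype.card_coe, Finset.card_sdiff_of_subset (Finset.subset_univ T), Finset.card_univ] at hchi
  have hTle : T.card ≤ Fintype.card V := le_trans (Finset.card_le_univ T) (le_of_eq Finset.card_univ)
  omega

section Swap

variable {G : SimpleGraph V} {P : Finset (V × V)}

/-- Generic augmenting-swap lemma: replacing a subset `R` of a maximum pairing by a strictly
larger set `N` of new valid pairs (disjoint among themselves and from `P \ R`) is impossible. -/
lemma pairing_swap (hP : IsPairing G P)
    (hmax : ∀ Q, IsPairing G Q → Q.card ≤ P.card)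
    {R N : Finset (V × V)} (hR : R ⊆ P) (hcard : R.card < N.card)
    (hN1 : ∀ n ∈ N, n.1 ≠ n.2 ∧ ¬ G.Adj n.1 n.2)
    (hN2 : ∀ n ∈ N, ∀ m ∈ N, n ≠ m → n.1 ≠ m.1 ∧ n.1 ≠ m.2 ∧ n.2 ≠ m.1 ∧ n.2 ≠ m.2)
    (hNP : ∀ n ∈ N, ∀ r ∈ P, r ∉ R → n.1 ≠ r.1 ∧ n.1 ≠ r.2 ∧ n.2 ≠ r.1 ∧ n.2 ≠ r.2) :
    False := by
  classical
  set Q : Finset (V × V) := (P \ R) ∪ N with hQ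
  have hmem : ∀ q ∈ Q, (q ∈ P ∧ q ∉ R) ∨ q ∈ N := by
    intro q hq
    rw [hQ, Finset.mem_union, Finset.mem_sdiff] at hq
    exact hq
  have hQP : IsPairing G Q := by
    constructor
    · intro p hp
      rcases hmem p hp with ⟨hp1, _⟩ | hp2
      · exact hP.1 p hp1
      · exact hN1 p hp2
    · intro p hp q hq hne
      rcases hmem p hp with ⟨hp1, hp2⟩ | hp3 <;> rcases hmem q hq with ⟨hq1, hq2⟩ | hq3
      · exact hP.2 p hp1 q hq1 hne
      · obtain ⟨h1, h2, h3, h4⟩ := hNP q hq3 p hp1 hp2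
        exact ⟨h1.symm, h3.symm, h2.symm, h4.symm⟩
      · exact hNP p hp3 q hq1 hq2
      · exact hN2 p hp3 q hq3 hne
  have hdisj : Disjoint (P \ R) N := by
    rw [Finset.disjoint_left]
    intro n hn hnN
    rw [Finset.mem_sdiff] at hn
    exact (hNP n hnN n hn.1 hn.2).1 rfl
  have hcardQ : Q.card = (P.card - R.card) + N.card := by
    rw [hQ, Finset.card_union_of_disjoint hdisj, Finset.card_sdiff_of_subset hR]
  have hRP : R.card ≤ P.card := Finset.card_le_card hR
  have := hmax Q hQP
  omega

/-- Vertices not covered by the pairing. -/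
def uncov (P : Finset (V × V)) : Finset V := Finset.univ \ spt P

lemma uncov_ne (hP : IsPairing G P) {u : V} (hu : u ∈ uncov P) {p : V × V} (hp : p ∈ P) :
    u ≠ p.1 ∧ u ≠ p.2 := by
  rw [uncov, Finset.mem_sdiff] at hu
  constructor
  · rintro rfl; exact hu.2 (mem_spt.2 ⟨p, hp, Or.inl rfl⟩)
  · rintro rfl; exact hu.2 (mem_spt.2 ⟨p, hp, Or.inr rfl⟩)

lemma card_uncov (hP : IsPairing G P) :
    (uncov P).card = Fintype.card V - 2 * P.card := by
  rw [uncov, Finset.card_sdiff_of_subset (Finset.subset_univ _), Finset.card_univ, card_spt hP]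

/-- If there is no independent triple, the uncovered set of a maximum pairing is a clique. -/
lemma uncov_clique (hP : IsPairing G P)
    (hmax : ∀ Q, IsPairing G Q → Q.card ≤ P.card) :
    G.IsClique ↑(uncov P) := by
  intro u hu w hw hne
  simp only [Finset.mem_coe] at hu hw
  by_contra hadj
  refine pairing_swap hP hmax (R := ∅) (N := {(u, w)}) (Finset.empty_subset P) (by simp) ?_ ?_ ?_
  · intro n hn
    rw [Finset.mem_singleton] at hn
    subst hn
    exact ⟨hne, hadj⟩
  · intro n hn m hm hne'
    rw [Finset.mem_singleton] at hn hm
    exact absurd (hn.trans hm.symm) hne'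
  · intro n hn r hr _
    rw [Finset.mem_singleton] at hn
    subst hn
    have h1 := uncov_ne hP hu hr
    have h2 := uncov_ne hP hw hr
    exact ⟨h1.1, h1.2, h2.1, h2.2⟩

/-- Each pair of a maximum pairing has an endpoint adjacent to every uncovered vertex
(provided there is no independent triple). -/
lemma exists_pick (hP : IsPairing G P)
    (hmax : ∀ Q, IsPairing G Q → Q.card ≤ P.card)
    (hco : ∀ x y z : V, x ≠ y → x ≠ z → y ≠ z →
      ¬G.Adj x y → ¬G.Adj x z → ¬G.Adj y z → False) :
    ∀ p ∈ P, ∃ b a : V, ((b = p.1 ∧ a = p.2) ∨ (b = p.2 ∧ a = p.1)) ∧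
      ∀ u ∈ uncov P, G.Adj b u := by
  intro p hp
  by_cases h1 : ∀ u ∈ uncov P, G.Adj p.1 u
  · exact ⟨p.1, p.2, Or.inl ⟨rfl, rfl⟩, h1⟩
  by_cases h2 : ∀ u ∈ uncov P, G.Adj p.2 u
  · exact ⟨p.2, p.1, Or.inr ⟨rfl, rfl⟩, h2⟩
  exfalso
  push_neg at h1 h2
  obtain ⟨u, hu, hu1⟩ := h1
  obtain ⟨w, hw, hw2⟩ := h2
  have hup := uncov_ne hP hu hp
  have hwp := uncov_ne hP hw hp
  by_cases huw : u = w
  · subst huw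
    exact hco u p.1 p.2 hup.1 hup.2 (hP.1 p hp).1 (fun h => hu1 h.symm)
      (fun h => hw2 h.symm) (hP.1 p hp).2
  · refine pairing_swap hP hmax (R := {p}) (N := {(p.1, u), (p.2, w)})
      (Finset.singleton_subset_iff.2 hp) ?_ ?_ ?_ ?_
    · have hnm : ((p.1, u)) ∉ ({(p.2, w)} : Finset (V × V)) := by
        simp only [Finset.mem_singleton, Prod.mk.injEq, not_and]
        intro h
        exact absurd h (hP.1 p hp).1
      rw [Finset.card_singleton, Finset.card_insert_of_notMem hnm, Finset.card_singleton]
      omega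
    · intro n hn
      simp only [Finset.mem_insert, Finset.mem_singleton] at hn
      rcases hn with rfl | rfl
      · exact ⟨Ne.symm hup.1, hu1⟩
      · exact ⟨Ne.symm hwp.2, hw2⟩
    · intro n hn m hm hne'
      simp only [Finset.mem_insert, Finset.mem_singleton] at hn hm
      rcases hn with rfl | rfl <;> rcases hm with rfl | rfl
      · exact absurd rfl hne'
      · exact ⟨(hP.1 p hp).1, fun h => hwp.1 h.symm, hup.2, huw⟩
      · exact ⟨fun h => (hP.1 p hp).1 h.symm, fun h => hup.2 h.symm, hwp.1, fun h => huw h.symm⟩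
      · exact absurd rfl hne'
    · intro n hn r hr hrR
      simp only [Finset.mem_singleton] at hrR
      have hpr := hP.2 p hp r hr (fun h => hrR h.symm)
      have hur := uncov_ne hP hu hr
      have hwr := uncov_ne hP hw hr
      simp only [Finset.mem_insert, Finset.mem_singleton] at hn
      rcases hn with rfl | rfl
      · exact ⟨hpr.1, hpr.2.1, hur.1, hur.2⟩
      · exact ⟨hpr.2.2.1, hpr.2.2.2, hwr.1, hwr.2⟩

lemma coord_ne {G : SimpleGraph V} {P : Finset (V × V)} (hP : IsPairing G P)
    {p q : V × V} (hp : p ∈ P) (hq : q ∈ P) (hpq : p ≠ q) {x y : V}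
    (hx : x = p.1 ∨ x = p.2) (hy : y = q.1 ∨ y = q.2) : x ≠ y := by
  obtain ⟨h1, h2, h3, h4⟩ := hP.2 p hp q hq hpq
  rcases hx with rfl | rfl <;> rcases hy with rfl | rfl <;> assumption

lemma coord_not_uncov {P : Finset (V × V)}
    {p : V × V} (hp : p ∈ P) {x : V} (hx : x = p.1 ∨ x = p.2) : x ∉ uncov P := by
  rw [uncov, Finset.mem_sdiff]
  rintro ⟨-, hns⟩
  rcases hx with rfl | rfl
  · exact hns (mem_spt.2 ⟨p, hp, Or.inl rfl⟩)
  · exact hns (mem_spt.2 ⟨p, hp, Or.inr rfl⟩)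

lemma isClique_triple {G : SimpleGraph V} {x y z : V}
    (hxy : G.Adj x y) (hxz : G.Adj x z) (hyz : G.Adj y z) :
    G.IsClique ↑({x, y, z} : Finset V) := by
  intro a ha b hb hne
  simp only [Finset.coe_insert, Set.mem_insert_iff, Finset.coe_singleton,
    Set.mem_singleton_iff] at ha hb
  rcases ha with rfl | rfl | rfl <;> rcases hb with rfl | rfl | rfl <;>
    first
      | exact absurd rfl hne
      | assumption
      | exact hxy.symm
      | exact hxz.symm
      | exact hyz.symm

/-- Extending (a subset of) the uncovered clique by a clique of covered vertices. -/
lemma clique_extend {G : SimpleGraph V} {P : Finset (V × V)} (hP : IsPairing G P)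
    (hmax : ∀ Q, IsPairing G Q → Q.card ≤ P.card)
    (U' T : Finset V) (hU' : U' ⊆ uncov P) (hTs : ∀ t ∈ T, t ∉ uncov P)
    (hT : G.IsClique ↑T) (hTU : ∀ t ∈ T, ∀ u ∈ U', G.Adj t u) :
    U'.card + T.card ≤ G.cliqueNum := by
  have hdisj : Disjoint U' T := by
    rw [Finset.disjoint_left]
    intro a ha haT
    exact hTs a haT (hU' ha)
  have hclique : G.IsClique ↑(U' ∪ T) := by
    intro a ha b hb hne
    simp only [Finset.coe_union, Set.mem_union, Finset.mem_coe] at ha hb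
    rcases ha with ha | ha <;> rcases hb with hb | hb
    · exact (uncov_clique hP hmax).subset (by exact_mod_cast Finset.coe_subset.2 hU')
        (Finset.mem_coe.2 ha) (Finset.mem_coe.2 hb) hne
    · exact (hTU b hb a ha).symm
    · exact hTU a ha b hb
    · exact hT (Finset.mem_coe.2 ha) (Finset.mem_coe.2 hb) hne
  calc U'.card + T.card = (U' ∪ T).card := (Finset.card_union_of_disjoint hdisj).symm
    _ ≤ G.cliqueNum := cliqueNum_lower G _ hclique

/-- Ramsey `R(3,3) = 6`: six vertices with no independent triple contain a triangle. -/
lemma ramsey33 {G : SimpleGraph V}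
    (hco : ∀ x y z : V, x ≠ y → x ≠ z → y ≠ z →
      ¬G.Adj x y → ¬G.Adj x z → ¬G.Adj y z → False)
    (W : Finset V) (hW : W.card = 6) :
    ∃ x ∈ W, ∃ y ∈ W, ∃ z ∈ W, x ≠ y ∧ x ≠ z ∧ y ≠ z ∧
      G.Adj x y ∧ G.Adj x z ∧ G.Adj y z := by
  classical
  have hWpos : 0 < W.card := by omega
  obtain ⟨x, hx⟩ := Finset.card_pos.1 hWpos
  set W' := W.erase x with hW'
  have hW'card : W'.card = 5 := by rw [hW', Finset.card_erase_of_mem hx, hW]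
  set A := W'.filter (fun y => G.Adj x y) with hA
  set B := W'.filter (fun y => ¬ G.Adj x y) with hB
  have hAB : A.card + B.card = 5 := by
    rw [hA, hB, Finset.card_filter_add_card_filter_not, hW'card]
  have hcases : 3 ≤ A.card ∨ 3 ≤ B.card := by omega
  rcases hcases with hc | hc
  · obtain ⟨T, hTA, hT3⟩ := Finset.exists_subset_card_eq hc
    obtain ⟨y, z, t, hyz, hyt, hzt, rfl⟩ := Finset.card_eq_three.1 hT3
    have hy : y ∈ A := hTA (by simp)
    have hz : z ∈ A := hTA (by simp)
    have ht : t ∈ A := hTA (by simp)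
    rw [hA, Finset.mem_filter] at hy hz ht
    have hy' : y ∈ W := Finset.mem_of_mem_erase hy.1
    have hz' : z ∈ W := Finset.mem_of_mem_erase hz.1
    have ht' : t ∈ W := Finset.mem_of_mem_erase ht.1
    have hxy : x ≠ y := fun h => G.irrefl (h ▸ hy.2)
    have hxz : x ≠ z := fun h => G.irrefl (h ▸ hz.2)
    have hxt : x ≠ t := fun h => G.irrefl (h ▸ ht.2)
    by_cases h1 : G.Adj y z
    · exact ⟨x, hx, y, hy', z, hz', hxy, hxz, hyz, hy.2, hz.2, h1⟩
    by_cases h2 : G.Adj y t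
    · exact ⟨x, hx, y, hy', t, ht', hxy, hxt, hyt, hy.2, ht.2, h2⟩
    by_cases h3 : G.Adj z t
    · exact ⟨x, hx, z, hz', t, ht', hxz, hxt, hzt, hz.2, ht.2, h3⟩
    exact absurd (hco y z t hyz hyt hzt h1 h2 h3) (fun h => h)
  · obtain ⟨T, hTB, hT3⟩ := Finset.exists_subset_card_eq hc
    obtain ⟨y, z, t, hyz, hyt, hzt, rfl⟩ := Finset.card_eq_three.1 hT3
    have hy : y ∈ B := hTB (by simp)
    have hz : z ∈ B := hTB (by simp)
    have ht : t ∈ B := hTB (by simp)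
    rw [hB, Finset.mem_filter] at hy hz ht
    have hy' : y ∈ W := Finset.mem_of_mem_erase hy.1
    have hz' : z ∈ W := Finset.mem_of_mem_erase hz.1
    have ht' : t ∈ W := Finset.mem_of_mem_erase ht.1
    have hxy : x ≠ y := (Finset.ne_of_mem_erase hy.1).symm
    have hxz : x ≠ z := (Finset.ne_of_mem_erase hz.1).symm
    have hxt : x ≠ t := (Finset.ne_of_mem_erase ht.1).symm
    have h1 : G.Adj y z := by
      by_contra h
      exact hco x y z hxy hxz hyz hy.2 hz.2 h
    have h2 : G.Adj y t := by
      by_contra h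
      exact hco x y t hxy hxt hyt hy.2 ht.2 h
    have h3 : G.Adj z t := by
      by_contra h
      exact hco x z t hxz hxt hzt hz.2 ht.2 h
    exact ⟨y, hy', z, hz', t, ht', hyz, hyt, hzt, h1, h2, h3⟩

lemma isClique_pair {G : SimpleGraph V} {x y : V} (hxy : G.Adj x y) :
    G.IsClique ↑({x, y} : Finset V) := by
  intro a ha b hb hne
  simp only [Finset.coe_insert, Set.mem_insert_iff, Finset.coe_singleton,
    Set.mem_singleton_iff] at ha hb
  rcases ha with rfl | rfl <;> rcases hb with rfl | rfl <;>
    first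
      | exact absurd rfl hne
      | exact hxy
      | exact hxy.symm

lemma two_le_card (G : SimpleGraph V) {P : Finset (V × V)} (hP : IsPairing G P) :
    2 * P.card ≤ Fintype.card V := by
  rw [← card_spt hP, ← Finset.card_univ]
  exact Finset.card_le_univ _

lemma CL1 {G : SimpleGraph V} {P : Finset (V × V)} (hP : IsPairing G P)
    (hmax : ∀ Q, IsPairing G Q → Q.card ≤ P.card)
    (hco : ∀ x y z : V, x ≠ y → x ≠ z → y ≠ z →
      ¬G.Adj x y → ¬G.Adj x z → ¬G.Adj y z → False)
    (h1 : 1 ≤ P.card) : Fintype.card V + 1 ≤ G.cliqueNum + 2 * P.card := by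
  obtain ⟨p, hp⟩ := Finset.card_pos.1 (by omega : 0 < P.card)
  obtain ⟨b, a, hba, hbU⟩ := exists_pick hP hmax hco p hp
  have hbc : b = p.1 ∨ b = p.2 := by
    rcases hba with ⟨h, -⟩ | ⟨h, -⟩
    · exact Or.inl h
    · exact Or.inr h
  have hext := clique_extend hP hmax (uncov P) {b} (Finset.Subset.refl _)
    (by intro t ht
        rw [Finset.mem_singleton] at ht
        subst ht
        exact coord_not_uncov hp hbc)
    (by rw [Finset.coe_singleton]; exact G.isClique_singleton b)
    (by intro t ht u hu
        rw [Finset.mem_singleton] at ht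
        subst ht
        exact hbU u hu)
  rw [Finset.card_singleton] at hext
  have hu := card_uncov hP
  have h2n := two_le_card G hP
  omega

lemma CL2 {G : SimpleGraph V} {P : Finset (V × V)} (hP : IsPairing G P)
    (hmax : ∀ Q, IsPairing G Q → Q.card ≤ P.card)
    (hco : ∀ x y z : V, x ≠ y → x ≠ z → y ≠ z →
      ¬G.Adj x y → ¬G.Adj x z → ¬G.Adj y z → False)
    (h3 : 3 ≤ P.card) : Fintype.card V + 2 ≤ G.cliqueNum + 2 * P.card := by
  obtain ⟨T, hTP, hT3⟩ := Finset.exists_subset_card_eq h3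
  obtain ⟨p, q, r, hpq, hpr, hqr, rfl⟩ := Finset.card_eq_three.1 hT3
  have hp : p ∈ P := hTP (by simp)
  have hq : q ∈ P := hTP (by simp)
  have hr : r ∈ P := hTP (by simp)
  obtain ⟨bp, ap, hbap, hbpU⟩ := exists_pick hP hmax hco p hp
  obtain ⟨bq, aq, hbaq, hbqU⟩ := exists_pick hP hmax hco q hq
  obtain ⟨br, ar, hbar, hbrU⟩ := exists_pick hP hmax hco r hr
  have hbpc : bp = p.1 ∨ bp = p.2 := by
    rcases hbap with ⟨h, -⟩ | ⟨h, -⟩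
    · exact Or.inl h
    · exact Or.inr h
  have hbqc : bq = q.1 ∨ bq = q.2 := by
    rcases hbaq with ⟨h, -⟩ | ⟨h, -⟩
    · exact Or.inl h
    · exact Or.inr h
  have hbrc : br = r.1 ∨ br = r.2 := by
    rcases hbar with ⟨h, -⟩ | ⟨h, -⟩
    · exact Or.inl h
    · exact Or.inr h
  have hne1 : bp ≠ bq := coord_ne hP hp hq hpq hbpc hbqc
  have hne2 : bp ≠ br := coord_ne hP hp hr hpr hbpc hbrc
  have hne3 : bq ≠ br := coord_ne hP hq hr hqr hbqc hbrc
  have key : ∃ x y : V, x ≠ y ∧ G.Adj x y ∧ x ∉ uncov P ∧ y ∉ uncov P ∧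
      (∀ u ∈ uncov P, G.Adj x u) ∧ (∀ u ∈ uncov P, G.Adj y u) := by
    by_cases h1 : G.Adj bp bq
    · exact ⟨bp, bq, hne1, h1, coord_not_uncov hp hbpc, coord_not_uncov hq hbqc, hbpU, hbqU⟩
    by_cases h2 : G.Adj bp br
    · exact ⟨bp, br, hne2, h2, coord_not_uncov hp hbpc, coord_not_uncov hr hbrc, hbpU, hbrU⟩
    by_cases h3' : G.Adj bq br
    · exact ⟨bq, br, hne3, h3', coord_not_uncov hq hbqc, coord_not_uncov hr hbrc, hbqU, hbrU⟩
    exact absurd (hco bp bq br hne1 hne2 hne3 h1 h2 h3') (fun h => h)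
  obtain ⟨x, y, hxy, hadj, hxnu, hynu, hxU, hyU⟩ := key
  have hext := clique_extend hP hmax (uncov P) {x, y} (Finset.Subset.refl _)
    (by intro t ht
        rw [Finset.mem_insert, Finset.mem_singleton] at ht
        rcases ht with rfl | rfl
        · exact hxnu
        · exact hynu)
    (isClique_pair hadj)
    (by intro t ht u hu
        rw [Finset.mem_insert, Finset.mem_singleton] at ht
        rcases ht with rfl | rfl
        · exact hxU u hu
        · exact hyU u hu)
  have hcard2 : ({x, y} : Finset V).card = 2 := by
    rw [Finset.card_insert_of_notMem (by rwa [Finset.mem_singleton]), Finset.card_singleton]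
  rw [hcard2] at hext
  have hu := card_uncov hP
  have h2n := two_le_card G hP
  omega

lemma CL3 {G : SimpleGraph V} {P : Finset (V × V)} (hP : IsPairing G P)
    (hmax : ∀ Q, IsPairing G Q → Q.card ≤ P.card)
    (hco : ∀ x y z : V, x ≠ y → x ≠ z → y ≠ z →
      ¬G.Adj x y → ¬G.Adj x z → ¬G.Adj y z → False)
    (h5 : P.card = 5) : Fintype.card V + 3 ≤ G.cliqueNum + 2 * P.card := by
  classical
  obtain ⟨p0, hp0⟩ := Finset.card_pos.1 (by omega : 0 < P.card)
  haveI : Inhabited V := ⟨p0.1⟩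
  choose! bf af hba hbU using exists_pick hP hmax hco
  have hbc : ∀ p ∈ P, bf p = p.1 ∨ bf p = p.2 := fun p hp => by
    rcases hba p hp with ⟨h, -⟩ | ⟨h, -⟩
    · exact Or.inl h
    · exact Or.inr h
  have hac : ∀ p ∈ P, af p = p.1 ∨ af p = p.2 := fun p hp => by
    rcases hba p hp with ⟨-, h⟩ | ⟨-, h⟩
    · exact Or.inr h
    · exact Or.inl h
  have hab : ∀ p ∈ P, bf p ≠ af p := fun p hp => by
    rcases hba p hp with ⟨h1, h2⟩ | ⟨h1, h2⟩
    · rw [h1, h2]; exact (hP.1 p hp).1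
    · rw [h1, h2]; exact (hP.1 p hp).1.symm
  have hbb : ∀ p ∈ P, ∀ q ∈ P, p ≠ q → bf p ≠ bf q :=
    fun p hp q hq h => coord_ne hP hp hq h (hbc p hp) (hbc q hq)
  have hbafn : ∀ p ∈ P, ∀ q ∈ P, p ≠ q → bf p ≠ af q :=
    fun p hp q hq h => coord_ne hP hp hq h (hbc p hp) (hac q hq)
  have haan : ∀ p ∈ P, ∀ q ∈ P, p ≠ q → af p ≠ af q :=
    fun p hp q hq h => coord_ne hP hp hq h (hac p hp) (hac q hq)
  have hbnu : ∀ p ∈ P, bf p ∉ uncov P := fun p hp => coord_not_uncov hp (hbc p hp)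
  have hanu : ∀ p ∈ P, af p ∉ uncov P := fun p hp => coord_not_uncov hp (hac p hp)
  have hucoord : ∀ {v : V}, v ∈ uncov P → ∀ {r : V × V}, r ∈ P → ∀ {x : V},
      (x = r.1 ∨ x = r.2) → v ≠ x := by
    intro v hv r hr x hx
    rcases hx with rfl | rfl
    · exact (uncov_ne hP hv hr).1
    · exact (uncov_ne hP hv hr).2
  have hu := card_uncov hP
  have h2n := two_le_card G hP
  by_cases htri : ∃ p ∈ P, ∃ q ∈ P, ∃ r ∈ P, p ≠ q ∧ p ≠ r ∧ q ≠ r ∧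
      G.Adj (bf p) (bf q) ∧ G.Adj (bf p) (bf r) ∧ G.Adj (bf q) (bf r)
  · obtain ⟨p, hp, q, hq, r, hr, hpq, hpr, hqr, h1, h2, h3⟩ := htri
    have hext := clique_extend hP hmax (uncov P) {bf p, bf q, bf r} (Finset.Subset.refl _)
      (by intro t ht
          simp only [Finset.mem_insert, Finset.mem_singleton] at ht
          rcases ht with rfl | rfl | rfl
          exacts [hbnu p hp, hbnu q hq, hbnu r hr])
      (isClique_triple h1 h2 h3)
      (by intro t ht u hu'
          simp only [Finset.mem_insert, Finset.mem_singleton] at ht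
          rcases ht with rfl | rfl | rfl
          exacts [hbU p hp u hu', hbU q hq u hu', hbU r hr u hu'])
    have hc3 : ({bf p, bf q, bf r} : Finset V).card = 3 := by
      rw [Finset.card_insert_of_notMem, Finset.card_insert_of_notMem,
        Finset.card_singleton]
      · rw [Finset.mem_singleton]
        exact hbb q hq r hr hqr
      · simp only [Finset.mem_insert, Finset.mem_singleton]
        push_neg
        exact ⟨hbb p hp q hq hpq, hbb p hp r hr hpr⟩
    rw [hc3] at hext
    omega
  · push_neg at htri
    have S3 : ∀ p ∈ P, ∀ q ∈ P, p ≠ q → ¬G.Adj (bf p) (bf q) →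
        ∀ u ∈ uncov P, ¬G.Adj (af p) u → ∀ w ∈ uncov P, ¬G.Adj (af q) w → u = w := by
      intro p hp q hq hpq hnadj u hu' hau w hw' haw
      by_contra huw
      refine pairing_swap hP hmax (R := {p, q})
        (N := {(af p, u), (bf p, bf q), (af q, w)}) ?_ ?_ ?_ ?_ ?_
      · intro r hr
        simp only [Finset.mem_insert, Finset.mem_singleton] at hr
        rcases hr with rfl | rfl
        · exact hp
        · exact hq
      · have hr2 : ({p, q} : Finset (V × V)).card = 2 := by
          rw [Finset.card_insert_of_notMem (by rwa [Finset.mem_singleton]),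
            Finset.card_singleton]
        have hn3 : ({(af p, u), (bf p, bf q), (af q, w)} : Finset (V × V)).card = 3 := by
          rw [Finset.card_insert_of_notMem, Finset.card_insert_of_notMem,
            Finset.card_singleton]
          · rw [Finset.mem_singleton]
            intro h
            exact hbafn p hp q hq hpq (congrArg Prod.fst h)
          · simp only [Finset.mem_insert, Finset.mem_singleton]
            push_neg
            constructor
            · intro h
              exact (hab p hp).symm (congrArg Prod.fst h)
            · intro h
              exact haan p hp q hq hpq (congrArg Prod.fst h)
        rw [hr2, hn3]
        omega
      · intro n hn
        simp only [Finset.mem_insert, Finset.mem_singleton] at hn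
        rcases hn with rfl | rfl | rfl
        · exact ⟨(hucoord hu' hp (hac p hp)).symm, hau⟩
        · exact ⟨hbb p hp q hq hpq, hnadj⟩
        · exact ⟨(hucoord hw' hq (hac q hq)).symm, haw⟩
      · intro n hn m hm hnm
        simp only [Finset.mem_insert, Finset.mem_singleton] at hn hm
        rcases hn with rfl | rfl | rfl <;> rcases hm with rfl | rfl | rfl <;>
          first | (exact absurd rfl hnm) | skip
        · exact ⟨(hab p hp).symm, (hbafn q hq p hp (Ne.symm hpq)).symm,
            hucoord hu' hp (hbc p hp), hucoord hu' hq (hbc q hq)⟩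
        · exact ⟨haan p hp q hq hpq, (hucoord hw' hp (hac p hp)).symm,
            hucoord hu' hq (hac q hq), huw⟩
        · exact ⟨hab p hp, (hucoord hu' hp (hbc p hp)).symm,
            hbafn q hq p hp (Ne.symm hpq), (hucoord hu' hq (hbc q hq)).symm⟩
        · exact ⟨hbafn p hp q hq hpq, (hucoord hw' hp (hbc p hp)).symm,
            hab q hq, (hucoord hw' hq (hbc q hq)).symm⟩
        · exact ⟨(haan p hp q hq hpq).symm, (hucoord hu' hq (hac q hq)).symm,
            hucoord hw' hp (hac p hp), fun h => huw h.symm⟩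
        · exact ⟨(hbafn p hp q hq hpq).symm, (hab q hq).symm,
            hucoord hw' hp (hbc p hp), hucoord hw' hq (hbc q hq)⟩
      · intro n hn r hr hrR
        simp only [Finset.mem_insert, Finset.mem_singleton] at hrR
        push_neg at hrR
        have hrp : p ≠ r := fun h => hrR.1 h.symm
        have hrq : q ≠ r := fun h => hrR.2 h.symm
        simp only [Finset.mem_insert, Finset.mem_singleton] at hn
        rcases hn with rfl | rfl | rfl
        · exact ⟨coord_ne hP hp hr hrp (hac p hp) (Or.inl rfl),
            coord_ne hP hp hr hrp (hac p hp) (Or.inr rfl),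
            hucoord hu' hr (Or.inl rfl), hucoord hu' hr (Or.inr rfl)⟩
        · exact ⟨coord_ne hP hp hr hrp (hbc p hp) (Or.inl rfl),
            coord_ne hP hp hr hrp (hbc p hp) (Or.inr rfl),
            coord_ne hP hq hr hrq (hbc q hq) (Or.inl rfl),
            coord_ne hP hq hr hrq (hbc q hq) (Or.inr rfl)⟩
        · exact ⟨coord_ne hP hq hr hrq (hac q hq) (Or.inl rfl),
            coord_ne hP hq hr hrq (hac q hq) (Or.inr rfl),
            hucoord hw' hr (Or.inl rfl), hucoord hw' hr (Or.inr rfl)⟩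
    by_cases hall : ∀ p ∈ P, ∃ u ∈ uncov P, ¬ G.Adj (af p) u
    · -- Case 1: every partner has an uncovered non-neighbor
      have htwo : ∀ s ∈ P, ∀ t ∈ P, ∀ w1 ∈ P, ∀ w2 ∈ P, s ≠ t →
          G.Adj (bf s) (bf t) → w1 ≠ w2 → w1 ≠ s → w1 ≠ t → w2 ≠ s → w2 ≠ t →
          G.Adj (bf w1) (bf s) → G.Adj (bf w2) (bf s) → False := by
        intro s hs t ht w1 hw1 w2 hw2 hst hadj h12 h1s h1t h2s h2t ha1 ha2
        have hn12 : ¬G.Adj (bf w1) (bf w2) :=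
          fun h => htri w1 hw1 w2 hw2 s hs h12 h1s h2s h ha1 ha2
        have hn1t : ¬G.Adj (bf w1) (bf t) :=
          fun h => htri w1 hw1 s hs t ht h1s h1t hst ha1 h hadj
        have hn2t : ¬G.Adj (bf w2) (bf t) :=
          fun h => htri w2 hw2 s hs t ht h2s h2t hst ha2 h hadj
        exact hco (bf w1) (bf w2) (bf t) (hbb w1 hw1 w2 hw2 h12) (hbb w1 hw1 t ht h1t)
          (hbb w2 hw2 t ht h2t) hn12 hn1t hn2t
      have hcom : ∀ p ∈ P, ∀ q ∈ P, p ≠ q → G.Adj (bf p) (bf q) →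
          ∃ r ∈ P, r ≠ p ∧ r ≠ q ∧ ¬G.Adj (bf r) (bf p) ∧ ¬G.Adj (bf r) (bf q) := by
        intro p hp q hq hpq hadj
        by_contra hcon
        push_neg at hcon
        have hside : ∀ r ∈ P, r ≠ p → r ≠ q →
            G.Adj (bf r) (bf p) ∨ G.Adj (bf r) (bf q) := by
          intro r hr h1 h2
          by_cases h : G.Adj (bf r) (bf p)
          · exact Or.inl h
          · exact Or.inr (hcon r hr h1 h2 h)
        have hq' : q ∈ P.erase p := Finset.mem_erase.2 ⟨Ne.symm hpq, hq⟩
        have hTcard : ((P.erase p).erase q).card = 3 := by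
          rw [Finset.card_erase_of_mem hq', Finset.card_erase_of_mem hp, h5]
        obtain ⟨x, y, z, hxy, hxz, hyz, hT⟩ := Finset.card_eq_three.1 hTcard
        have hmemT : ∀ w ∈ ((P.erase p).erase q), w ∈ P ∧ w ≠ p ∧ w ≠ q := by
          intro w hw
          rw [Finset.mem_erase, Finset.mem_erase] at hw
          exact ⟨hw.2.2, hw.2.1, hw.1⟩
        have hxm := hmemT x (by rw [hT]; simp)
        have hym := hmemT y (by rw [hT]; simp)
        have hzm := hmemT z (by rw [hT]; simp)
        obtain ⟨hxP, hxp, hxq⟩ := hxm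
        obtain ⟨hyP, hyp, hyq⟩ := hym
        obtain ⟨hzP, hzp, hzq⟩ := hzm
        have hsx := hside x hxP hxp hxq
        have hsy := hside y hyP hyp hyq
        have hsz := hside z hzP hzp hzq
        rcases hsx with hxs | hxs
        · rcases hsy with hys | hys
          · exact htwo p hp q hq x hxP y hyP hpq hadj hxy hxp hxq hyp hyq hxs hys
          · rcases hsz with hzs | hzs
            · exact htwo p hp q hq x hxP z hzP hpq hadj hxz hxp hxq hzp hzq hxs hzs
            · exact htwo q hq p hp y hyP z hzP (Ne.symm hpq) hadj.symm hyz hyq hyp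
                hzq hzp hys hzs
        · rcases hsy with hys | hys
          · rcases hsz with hzs | hzs
            · exact htwo p hp q hq y hyP z hzP hpq hadj hyz hyp hyq hzp hzq hys hzs
            · exact htwo q hq p hp x hxP z hzP (Ne.symm hpq) hadj.symm hxz hxq hxp
                hzq hzp hxs hzs
          · exact htwo q hq p hp x hxP y hyP (Ne.symm hpq) hadj.symm hxy hxq hxp
              hyq hyp hxs hys
      have hEq : ∀ p ∈ P, ∀ q ∈ P, p ≠ q → ∀ u ∈ uncov P, ¬G.Adj (af p) u →
          ∀ w ∈ uncov P, ¬G.Adj (af q) w → u = w := by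
        intro p hp q hq hpq u hu' hau w hw' haw
        by_cases hadjb : G.Adj (bf p) (bf q)
        · obtain ⟨r, hr, hrp, hrq, hn1, hn2⟩ := hcom p hp q hq hpq hadjb
          obtain ⟨d, hd, had⟩ := hall r hr
          have e1 : u = d := S3 p hp r hr (Ne.symm hrp) (fun h => hn1 h.symm) u hu' hau d hd had
          have e2 : d = w := S3 r hr q hq hrq hn2 d hd had w hw' haw
          exact e1.trans e2
        · exact S3 p hp q hq hpq hadjb u hu' hau w hw' haw
      obtain ⟨ustar, hustar, haustar⟩ := hall p0 hp0
      have hstar : ∀ p ∈ P, ∀ u ∈ uncov P, ¬G.Adj (af p) u → u = ustar := by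
        intro p hp u hu' hau
        by_cases hpp : p = p0
        · subst hpp
          obtain ⟨q, hqP, hqne⟩ : ∃ q ∈ P, q ≠ p := by
            have hne : (P.erase p).Nonempty := by
              apply Finset.card_pos.1
              rw [Finset.card_erase_of_mem hp, h5]
              omega
            obtain ⟨q, hq⟩ := hne
            exact ⟨q, Finset.mem_of_mem_erase hq, Finset.ne_of_mem_erase hq⟩
          obtain ⟨d, hd, had⟩ := hall q hqP
          have e1 : u = d := hEq p hp q hqP (Ne.symm hqne) u hu' hau d hd had
          have e2 : ustar = d := hEq p hp q hqP (Ne.symm hqne) ustar hustar haustar d hd had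
          exact e1.trans e2.symm
        · exact hEq p hp p0 hp0 hpp u hu' hau ustar hustar haustar
      have haUadj : ∀ p ∈ P, ∀ u ∈ uncov P, u ≠ ustar → G.Adj (af p) u := by
        intro p hp u hu' hne
        by_contra h
        exact hne (hstar p hp u hu' h)
      have haa : ∀ p ∈ P, ∀ q ∈ P, p ≠ q → G.Adj (af p) (af q) := by
        intro p hp q hq hpq
        by_contra hna
        obtain ⟨up, hup, haup⟩ := hall p hp
        obtain ⟨uq, huq, hauq⟩ := hall q hq
        have h1 : ¬G.Adj (af p) ustar := by
          rw [← hstar p hp up hup haup]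
          exact haup
        have h2 : ¬G.Adj (af q) ustar := by
          rw [← hstar q hq uq huq hauq]
          exact hauq
        exact hco (af p) (af q) ustar (haan p hp q hq hpq)
          (hucoord hustar hp (hac p hp)).symm (hucoord hustar hq (hac q hq)).symm hna h1 h2
      have himcard : (P.image af).card = 5 := by
        rw [Finset.card_image_of_injOn, h5]
        intro p hp q hq h
        by_contra hne
        exact haan p hp q hq hne h
      have hext := clique_extend hP hmax ((uncov P).erase ustar) (P.image af)
        (Finset.erase_subset _ _)
        (by intro t ht
            rw [Finset.mem_image] at ht
            obtain ⟨p, hp, rfl⟩ := ht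
            exact hanu p hp)
        (by intro a ha b hb hne
            simp only [Finset.coe_image, Set.mem_image, Finset.mem_coe] at ha hb
            obtain ⟨p, hp, rfl⟩ := ha
            obtain ⟨q, hq, rfl⟩ := hb
            have hpq : p ≠ q := fun h => hne (by rw [h])
            exact haa p hp q hq hpq)
        (by intro t ht u hu'
            rw [Finset.mem_image] at ht
            obtain ⟨p, hp, rfl⟩ := ht
            rw [Finset.mem_erase] at hu'
            exact haUadj p hp u hu'.2 hu'.1)
      rw [himcard, Finset.card_erase_of_mem hustar] at hext
      have hupos : 1 ≤ (uncov P).card := Finset.card_pos.2 ⟨ustar, hustar⟩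
      omega
    · -- Case 2: some partner is adjacent to all uncovered vertices: Ramsey R(3,3)
      push_neg at hall
      obtain ⟨p1, hp1, hp1U⟩ := hall
      set W : Finset V := insert (af p1) (P.image bf) with hW
      have hbimcard : (P.image bf).card = 5 := by
        rw [Finset.card_image_of_injOn, h5]
        intro p hp q hq h
        by_contra hne
        exact hbb p hp q hq hne h
      have hafnm : af p1 ∉ P.image bf := by
        rw [Finset.mem_image]
        rintro ⟨q, hq, hqe⟩
        by_cases hqp : q = p1
        · subst hqp
          exact hab q hq hqe
        · exact hbafn q hq p1 hp1 hqp hqe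
      have hW6 : W.card = 6 := by
        rw [hW, Finset.card_insert_of_notMem hafnm, hbimcard]
      have hWU : ∀ t ∈ W, ∀ u ∈ uncov P, G.Adj t u := by
        intro t ht u hu'
        rw [hW, Finset.mem_insert] at ht
        rcases ht with rfl | ht
        · exact hp1U u hu'
        · rw [Finset.mem_image] at ht
          obtain ⟨q, hq, rfl⟩ := ht
          exact hbU q hq u hu'
      have hWnu : ∀ t ∈ W, t ∉ uncov P := by
        intro t ht
        rw [hW, Finset.mem_insert] at ht
        rcases ht with rfl | ht
        · exact hanu p1 hp1
        · rw [Finset.mem_image] at ht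
          obtain ⟨q, hq, rfl⟩ := ht
          exact hbnu q hq
      obtain ⟨x, hx, y, hy, z, hz, hxy, hxz, hyz, a1, a2, a3⟩ := ramsey33 hco W hW6
      have hext := clique_extend hP hmax (uncov P) {x, y, z} (Finset.Subset.refl _)
        (by intro t ht
            simp only [Finset.mem_insert, Finset.mem_singleton] at ht
            rcases ht with rfl | rfl | rfl
            exacts [hWnu _ hx, hWnu _ hy, hWnu _ hz])
        (isClique_triple a1 a2 a3)
        (by intro t ht u hu'
            simp only [Finset.mem_insert, Finset.mem_singleton] at ht
            rcases ht with rfl | rfl | rfl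
            exacts [hWU _ hx u hu', hWU _ hy u hu', hWU _ hz u hu'])
      have hc3 : ({x, y, z} : Finset V).card = 3 := by
        rw [Finset.card_insert_of_notMem, Finset.card_insert_of_notMem,
          Finset.card_singleton]
        · rw [Finset.mem_singleton]
          exact hyz
        · simp only [Finset.mem_insert, Finset.mem_singleton]
          push_neg
          exact ⟨hxy, hxz⟩
      rw [hc3] at hext
      omega

end Swap

lemma step_lemma (G : SimpleGraph V) (K : ℕ) (hK1 : 1 ≤ K) (hK3 : K ≤ 3)
    (prev : ∀ (W : Type) [Fintype W] (H : SimpleGraph W),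
      H.cliqueNum + (K - 1) ≤ chi H → chi H + 2 * (K - 1) ≤ Fintype.card W)
    (hf : G.cliqueNum + K ≤ chi G) : chi G + 2 * K ≤ Fintype.card V := by
  classical
  by_cases hex : ∃ x y z : V, x ≠ y ∧ x ≠ z ∧ y ≠ z ∧ ¬G.Adj x y ∧ ¬G.Adj x z ∧ ¬G.Adj y z
  · obtain ⟨x, y, z, hxy, hxz, hyz, n1, n2, n3⟩ := hex
    set Sf : Finset V := {x, y, z} with hSf
    set S : Set V := ↑Sf with hS
    haveI : Fintype ↥(Sᶜ) := Fintype.ofFinite _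
    have hSmem : ∀ a, a ∈ S ↔ a = x ∨ a = y ∨ a = z := by
      intro a
      simp [hS, hSf]
    have hSind : ∀ a ∈ S, ∀ b ∈ S, a ≠ b → ¬ G.Adj a b := by
      intro a ha b hb hab
      rw [hSmem] at ha hb
      rcases ha with rfl | rfl | rfl <;> rcases hb with rfl | rfl | rfl <;>
        first
          | exact absurd rfl hab
          | assumption
          | exact fun h => n1 h.symm
          | exact fun h => n2 h.symm
          | exact fun h => n3 h.symm
    have h1 : chi G ≤ chi (G.induce Sᶜ) + 1 := chi_induce_compl G S hSind
    have h2 : (G.induce Sᶜ).cliqueNum ≤ G.cliqueNum := cliqueNum_induce_le G Sᶜ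
    have h3 : (G.induce Sᶜ).cliqueNum + (K - 1) ≤ chi (G.induce Sᶜ) := by omega
    have h4 := prev _ (G.induce Sᶜ) h3
    have hSfcard : Sf.card = 3 := by
      rw [hSf, Finset.card_insert_of_notMem, Finset.card_insert_of_notMem,
        Finset.card_singleton]
      · rw [Finset.mem_singleton]
        exact hyz
      · simp only [Finset.mem_insert, Finset.mem_singleton]
        push_neg
        exact ⟨hxy, hxz⟩
    have hcardS : Fintype.card ↥S = 3 := by
      rw [← hSfcard, ← Fintype.card_coe Sf]
      exact Fintype.card_congr (Equiv.subtypeEquivRight (fun a => by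
        rw [hS]
        exact Iff.rfl))
    have hcardC : Fintype.card ↥(Sᶜ) = Fintype.card V - 3 := by
      rw [Fintype.card_compl_set, hcardS]
    have hn3 : 3 ≤ Fintype.card V := by
      rw [← hSfcard, ← Finset.card_univ]
      exact Finset.card_le_univ _
    omega
  · push_neg at hex
    have hcoF : ∀ x y z : V, x ≠ y → x ≠ z → y ≠ z →
        ¬G.Adj x y → ¬G.Adj x z → ¬G.Adj y z → False := by
      intro x y z h1 h2 h3 h4 h5 h6
      exact h6 (hex x y z h1 h2 h3 h4 h5)
    obtain ⟨P, hP, hmax⟩ := exists_max_pairing G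
    have hchiP := chi_add_pairing_le G P hP
    by_cases hb : 2 * K ≤ P.card
    · omega
    · exfalso
      have hωchi : G.cliqueNum + K ≤ chi G := hf
      have c0 : Fintype.card V ≤ G.cliqueNum + 2 * P.card := by
        have h := cliqueNum_lower G (uncov P) (uncov_clique hP hmax)
        have hu := card_uncov hP
        have h2n := two_le_card G hP
        omega
      rcases Nat.lt_or_ge P.card 1 with h | h
      · omega
      rcases Nat.lt_or_ge P.card 3 with h' | h'
      · have := CL1 hP hmax hcoF h
        omega
      rcases Nat.lt_or_ge P.card 5 with h'' | h''
      · have := CL2 hP hmax hcoF h'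
        omega
      · have h5 : P.card = 5 := by omega
        have := CL3 hP hmax hcoF h5
        omega

lemma main_L : ∀ (K : ℕ), K ≤ 3 → ∀ (V : Type) [Fintype V] (G : SimpleGraph V),
    G.cliqueNum + K ≤ chi G → chi G + 2 * K ≤ Fintype.card V := by
  intro K
  induction K with
  | zero =>
    intro _ V _ G h
    classical
    have := chi_le_card G
    omega
  | succ k ih =>
    intro hk V _ G h
    classical
    refine step_lemma G (k + 1) (by omega) hk ?_ h
    intro W _ H hH
    have hk' : k + 1 - 1 = k := rfl
    rw [hk'] at hH ⊢
    exact ih (by omega) W H hH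

end ProofAux

theorem statement_1 {V : Type} [Fintype V] (G : SimpleGraph V)
    (hf : G.cliqueNum + 3 ≤ chi G) :
    chi G + 6 ≤ Fintype.card V := by
  have := ProofAux.main_L 3 (le_refl 3) V G hf
  omega
end

section
/- Let a₁,…,a_r be integers with a_i ≥ 2. If a finite simple graph G satisfies G →e (a₁,…,a_r), then χ(G) ≥ R(a₁,…,a_r). -/
open SimpleGraph

/-- `Arrows G a` means `G →e (a 0, …, a (r-1))`: for every `r`-coloring of the
edges of `G` there are an index `i` and an `(a i)`-clique all of whose edges
get color `i`. -/
def Arrows {V : Type*} (G : SimpleGraph V) {r : ℕ} (a : Fin r → ℕ) : Prop :=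
  ∀ C : Sym2 V → Fin r, ∃ i : Fin r, ∃ s : Finset V,
    G.IsNClique (a i) s ∧ ∀ u ∈ s, ∀ v ∈ s, G.Adj u v → C s(u, v) = i

/-- The Ramsey number `R(a 0, …, a (r-1))`. -/
noncomputable def ramseyNumber {r : ℕ} (a : Fin r → ℕ) : ℕ :=
  sInf {n | Arrows (⊤ : SimpleGraph (Fin n)) a}

/-- The edge Folkman number `F_e(a 0, …, a (r-1); q)`. -/
noncomputable def folkmanNumber {r : ℕ} (a : Fin r → ℕ) (q : ℕ) : ℕ :=
  sInf {n | ∃ G : SimpleGraph (Fin n), Arrows G a ∧ G.cliqueNum < q}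

theorem statement_19 {V : Type} [Fintype V] (G : SimpleGraph V)
    {r : ℕ} (a : Fin r → ℕ) (ha : ∀ i, 2 ≤ a i)
    (hG : Arrows G a) :
    ramseyNumber a ≤ chi G := by
  classical
  obtain ⟨c⟩ : G.Colorable (chi G) := G.colorable_chromaticNumber_of_fintype
  have : Arrows (⊤ : SimpleGraph (Fin (chi G))) a := by
    intro C
    obtain ⟨i, s, hs, hmono⟩ := hG (fun e => C (e.map c))
    refine ⟨i, s.image c, ⟨?_, ?_⟩, ?_⟩
    · intro x hx y hy hxy
      exact hxy
    · rw [Finset.card_image_of_injOn, hs.card_eq]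
      intro u hu v hv hcv
      by_contra huv
      exact (c.valid (hs.isClique hu hv huv)) hcv
    · rintro x hx y hy hxy
      rw [Finset.mem_image] at hx hy
      obtain ⟨u, hu, rfl⟩ := hx
      obtain ⟨v, hv, rfl⟩ := hy
      have huv : u ≠ v := fun h => hxy.ne (by rw [h])
      have hadj := hs.isClique hu hv huv
      have := hmono u hu v hv hadj
      rwa [Sym2.map_pair_eq] at this
  exact Nat.sInf_le this
end
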